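/- Let k ≥ 1 and μ ∈ ℝ, and let τ be the 1-form on (ℂ\{0})² given at (x,y) by τ(v,w) = (μ/y + 1/y^{k+1})·w − v/x. Then the real 1-form Re(τ) is exact on (ℂ\{0})²: Re(τ) = dF where F(x,y) = μ log|y| − log|x| − Re(1/(k yᵏ)). Consequently, any two points joined by a differentiable curve everywhere tangent to ker Re(τ) have the same value of F, and every differentiable curve with endpoints in a level set {F = c} has an interior point of tangency with ker Re(τ). -/

import Mathlib

open Complex

lemma aux_logabs (x : ℂ) (hx : x ≠ 0) :
    ∃ L : ℂ →L[ℝ] ℝ, HasFDerivAt (fun z : ℂ => Real.log (‖z‖)) L x ∧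
      ∀ v, L v = (v / x).re := by
  have hes : (fun z : ℂ => Real.log (‖z‖))
      = fun z => 2⁻¹ * Real.log (Complex.normSq z) := by
    funext z
    rw [Complex.norm_def, Real.log_sqrt (Complex.normSq_nonneg z)]
    ring
  have hre := Complex.reCLM.hasFDerivAt (x := x)
  have him := Complex.imCLM.hasFDerivAt (x := x)
  have hA : HasFDerivAt (fun z : ℂ => z.re * z.re + z.im * z.im)
      ((x.re • Complex.reCLM + x.re • Complex.reCLM)
        + (x.im • Complex.imCLM + x.im • Complex.imCLM)) x := (hre.mul hre).add (him.mul him)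
  have hnormSq : HasFDerivAt Complex.normSq
      ((x.re • Complex.reCLM + x.re • Complex.reCLM)
        + (x.im • Complex.imCLM + x.im • Complex.imCLM)) x := by
    refine hA.congr_of_eventuallyEq ?_
    filter_upwards with z using by simp [Complex.normSq_apply]
  have hns : Complex.normSq x ≠ 0 := by simpa using Complex.normSq_pos.2 hx
  have hlog := (Real.hasDerivAt_log hns).comp_hasFDerivAt x hnormSq
  have h2 := hlog.const_mul (2⁻¹ : ℝ)
  refine ⟨((2:ℝ))⁻¹ • (Complex.normSq x)⁻¹ • (x.re • Complex.reCLM + x.re • Complex.reCLM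
      + (x.im • Complex.imCLM + x.im • Complex.imCLM)), ?_, fun v => ?_⟩
  · rw [hes]; exact h2
  simp only [ContinuousLinearMap.coe_smul', Pi.smul_apply, ContinuousLinearMap.add_apply,
    ContinuousLinearMap.smul_apply, Complex.reCLM_apply, Complex.imCLM_apply, smul_eq_mul]
  rw [Complex.div_re]
  have h0 : Complex.normSq x > 0 := Complex.normSq_pos.2 hx
  have hne : x.re ^ 2 + x.im ^ 2 ≠ 0 := by
    have := h0; rw [Complex.normSq_apply] at this; nlinarith
  field_simp [Complex.normSq_apply]
  have hne2 : x.re * x.re + x.im * x.im ≠ 0 := fun h => hne (by rw [pow_two, pow_two]; exact h)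
  field_simp
  ring

lemma aux_g (k : ℕ) (hk : 1 ≤ k) (y : ℂ) (hy : y ≠ 0) :
    ∃ L : ℂ →L[ℝ] ℝ, HasFDerivAt (fun z : ℂ => (1 / ((k : ℂ) * z ^ k)).re) L y ∧
      ∀ v, L v = (-(1 / y ^ (k + 1)) * v).re := by
  have hk0 : (k : ℂ) ≠ 0 := Nat.cast_ne_zero.2 (by omega)
  have hpow := hasDerivAt_pow k y
  have hc := hpow.const_mul (k : ℂ)
  have hinv := hc.inv (mul_ne_zero hk0 (pow_ne_zero k hy))
  have hd : -((k:ℂ) * ((k:ℂ) * y ^ (k - 1))) / ((k:ℂ) * y ^ k) ^ 2 = -(1 / y ^ (k + 1)) := by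
    have hpows : y ^ (k - 1) * y ^ (k + 1) = (y ^ k) ^ 2 := by
      rw [← pow_add, ← pow_mul]; congr 1; omega
    field_simp
    linear_combination -hpows
  rw [hd] at hinv
  have hfd := (hinv.hasFDerivAt).restrictScalars ℝ
  have hcomp := (Complex.reCLM.hasFDerivAt (x := ((k:ℂ) * y ^ k)⁻¹)).comp y hfd
  have heq : (fun z : ℂ => (1 / ((k : ℂ) * z ^ k)).re)
      = Complex.reCLM ∘ (fun z : ℂ => (k : ℂ) * z ^ k)⁻¹ := by
    funext z; simp [one_div]
  rw [← heq] at hcomp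
  refine ⟨_, hcomp, fun v => ?_⟩
  simp [mul_comm]

/-- For real `μ`, `Re(τ)` with `τ = (μ/y + 1/y^{k+1})dy - dx/x` is exact on `(ℂ*)²`,
equal to `dF` for `F(x,y) = μ log|y| - log|x| - Re(1/(k yᵏ))`.  Consequently, `F` is
constant along curves tangent to `ker Re(τ)`, and every curve with endpoints in a level
set of `F` has an interior tangency with `ker Re(τ)` (Rolle property). -/
theorem stmt18 (k : ℕ) (hk : 1 ≤ k) (μ : ℝ)
    (τ : ℂ × ℂ → ℂ × ℂ → ℂ)
    (hτ : ∀ p v, τ p v = ((μ : ℂ) / p.2 + 1 / p.2 ^ (k + 1)) * v.2 - v.1 / p.1)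
    (F : ℂ × ℂ → ℝ)
    (hF : ∀ p, F p = μ * Real.log (‖p.2‖) - Real.log (‖p.1‖)
      - (1 / ((k : ℂ) * p.2 ^ k)).re) :
    (∀ p : ℂ × ℂ, p.1 ≠ 0 → p.2 ≠ 0 →
      DifferentiableAt ℝ F p ∧ ∀ v, fderiv ℝ F p v = (τ p v).re) ∧
    (∀ γ : ℝ → ℂ × ℂ,
      (∀ t ∈ Set.Icc (0:ℝ) 1, DifferentiableAt ℝ γ t ∧ (γ t).1 ≠ 0 ∧ (γ t).2 ≠ 0 ∧
        (τ (γ t) (deriv γ t)).re = 0) →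
      F (γ 0) = F (γ 1)) ∧
    (∀ γ : ℝ → ℂ × ℂ,
      (∀ t ∈ Set.Icc (0:ℝ) 1, DifferentiableAt ℝ γ t ∧ (γ t).1 ≠ 0 ∧ (γ t).2 ≠ 0) →
      F (γ 0) = F (γ 1) →
      ∃ t ∈ Set.Ioo (0:ℝ) 1, (τ (γ t) (deriv γ t)).re = 0) := by
  -- key: at each point with nonzero coordinates, F has an explicit derivative
  have key : ∀ p : ℂ × ℂ, p.1 ≠ 0 → p.2 ≠ 0 →
      ∃ L : (ℂ × ℂ) →L[ℝ] ℝ, HasFDerivAt F L p ∧ ∀ v, L v = (τ p v).re := by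
    intro p h1 h2
    obtain ⟨L1, hL1, hL1v⟩ := aux_logabs p.1 h1
    obtain ⟨L2, hL2, hL2v⟩ := aux_logabs p.2 h2
    obtain ⟨LG, hLG, hLGv⟩ := aux_g k hk p.2 h2
    have hfst : HasFDerivAt (fun q : ℂ × ℂ => q.1) (ContinuousLinearMap.fst ℝ ℂ ℂ) p :=
      hasFDerivAt_fst
    have hsnd : HasFDerivAt (fun q : ℂ × ℂ => q.2) (ContinuousLinearMap.snd ℝ ℂ ℂ) p :=
      hasFDerivAt_snd
    have hA1 : HasFDerivAt (fun q : ℂ × ℂ => Real.log (‖q.1‖))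
        (L1.comp (ContinuousLinearMap.fst ℝ ℂ ℂ)) p := hL1.comp p hfst
    have hA2 : HasFDerivAt (fun q : ℂ × ℂ => Real.log (‖q.2‖))
        (L2.comp (ContinuousLinearMap.snd ℝ ℂ ℂ)) p := hL2.comp p hsnd
    have hG : HasFDerivAt (fun q : ℂ × ℂ => (1 / ((k : ℂ) * q.2 ^ k)).re)
        (LG.comp (ContinuousLinearMap.snd ℝ ℂ ℂ)) p := hLG.comp p hsnd
    have htot := ((hA2.const_mul μ).sub hA1).sub hG
    have hFeq : F = fun q : ℂ × ℂ => μ * Real.log (‖q.2‖)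
        - Real.log (‖q.1‖) - (1 / ((k : ℂ) * q.2 ^ k)).re := funext hF
    replace htot := htot.congr_of_eventuallyEq (Filter.Eventually.of_forall fun q => hF q)
    refine ⟨_, htot, fun v => ?_⟩
    rw [hτ]
    have hsplit : ((μ : ℂ) / p.2 + 1 / p.2 ^ (k + 1)) * v.2 - v.1 / p.1
        = (μ : ℂ) * (v.2 / p.2) - v.1 / p.1 - (-(1 / p.2 ^ (k + 1)) * v.2) := by ring
    rw [hsplit]
    simp only [ContinuousLinearMap.sub_apply, ContinuousLinearMap.smul_apply,
      ContinuousLinearMap.comp_apply, ContinuousLinearMap.coe_fst', ContinuousLinearMap.coe_snd',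
      smul_eq_mul, hL1v, hL2v, hLGv, Complex.sub_re, Complex.re_ofReal_mul]
    try ring_nf
    try ring
  constructor
  · intro p h1 h2
    obtain ⟨L, hL, hLv⟩ := key p h1 h2
    exact ⟨hL.differentiableAt, fun v => by rw [hL.fderiv]; exact hLv v⟩
  have hderivcomp : ∀ (γ : ℝ → ℂ × ℂ) (t : ℝ), DifferentiableAt ℝ γ t → (γ t).1 ≠ 0 →
      (γ t).2 ≠ 0 → HasDerivAt (F ∘ γ) ((τ (γ t) (deriv γ t)).re) t := by
    intro γ t hγ h1 h2
    obtain ⟨L, hL, hLv⟩ := key (γ t) h1 h2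
    have := hL.comp_hasDerivAt t hγ.hasDerivAt
    rwa [hLv] at this
  constructor
  · intro γ hγ
    have hcont : ContinuousOn (F ∘ γ) (Set.Icc 0 1) := fun t ht =>
      ((hderivcomp γ t (hγ t ht).1 (hγ t ht).2.1 (hγ t ht).2.2.1).continuousAt).continuousWithinAt
    have hzero : ∀ t ∈ Set.Ico (0:ℝ) 1, HasDerivWithinAt (F ∘ γ) 0 (Set.Ici t) t := by
      intro t ht
      have ht' : t ∈ Set.Icc (0:ℝ) 1 := ⟨ht.1, ht.2.le⟩
      obtain ⟨hγd, h1, h2, hz⟩ := hγ t ht'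
      have := hderivcomp γ t hγd h1 h2
      rw [hz] at this
      exact this.hasDerivWithinAt
    have := constant_of_has_deriv_right_zero hcont hzero 1 (by norm_num)
    simpa using this.symm
  · intro γ hγ hFγ
    have hcont : ContinuousOn (F ∘ γ) (Set.Icc 0 1) := fun t ht =>
      ((hderivcomp γ t (hγ t ht).1 (hγ t ht).2.1 (hγ t ht).2.2).continuousAt).continuousWithinAt
    obtain ⟨t, ht, hdz⟩ := exists_deriv_eq_zero (f := F ∘ γ) (by norm_num : (0:ℝ) < 1) hcont
      (by simpa using hFγ)
    have ht' : t ∈ Set.Icc (0:ℝ) 1 := ⟨ht.1.le, ht.2.le⟩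
    obtain ⟨hγd, h1, h2⟩ := hγ t ht'
    have := (hderivcomp γ t hγd h1 h2).deriv
    rw [hdz] at this
    exact ⟨t, ht, this.symm⟩
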